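/- If h is an endomorphism of a Boolean algebra B and the quotient B / Ex Ker(h) is infinite, then there exists a sequence of pairwise disjoint elements dₙ ∈ B (n < ω) such that h(dₙ) ≰ dₙ for every n. -/
import Mathlib


variable {B : Type*} [BooleanAlgebra B]

def exKer (h : B → B) : Set B :=
  {z | ∃ x₁ x₂ : B, z = x₁ ⊔ x₂ ∧ h x₁ = ⊥ ∧ ∀ y ≤ x₂, h y = y}

section aux

variable (h : B → B)

lemma exKer_monotone (hsup : ∀ x y, h (x ⊔ y) = h x ⊔ h y) : Monotone h := by
  intro a b hab
  have := hsup a b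
  rw [sup_eq_right.mpr hab] at this
  exact this ▸ le_sup_left

lemma exKer_bot_mem (hbot : h ⊥ = ⊥) : (⊥ : B) ∈ exKer h :=
  ⟨⊥, ⊥, by simp, hbot, fun y hy => by rw [le_bot_iff.mp hy, hbot]⟩

lemma exKer_down (hsup : ∀ x y, h (x ⊔ y) = h x ⊔ h y) {z w : B} (hwz : w ≤ z)
    (hz : z ∈ exKer h) : w ∈ exKer h := by
  obtain ⟨x₁, x₂, rfl, h1, h2⟩ := hz
  refine ⟨w ⊓ x₁, w ⊓ x₂, ?_, ?_, ?_⟩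
  · rw [← inf_sup_left, inf_eq_left.mpr hwz]
  · exact le_bot_iff.mp (h1 ▸ exKer_monotone h hsup inf_le_right)
  · exact fun y hy => h2 y (hy.trans inf_le_right)

lemma exKer_sup_mem (hsup : ∀ x y, h (x ⊔ y) = h x ⊔ h y) {z z' : B}
    (hz : z ∈ exKer h) (hz' : z' ∈ exKer h) : z ⊔ z' ∈ exKer h := by
  obtain ⟨x₁, x₂, rfl, h1, h2⟩ := hz
  obtain ⟨x₁', x₂', rfl, h1', h2'⟩ := hz'
  refine ⟨x₁ ⊔ x₁', x₂ ⊔ x₂', by rw [sup_sup_sup_comm], by rw [hsup, h1, h1', bot_sup_eq], ?_⟩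
  intro y hy
  have hdecomp : y = (y ⊓ x₂) ⊔ (y \ x₂) := (sup_inf_sdiff y x₂).symm
  have hle : y \ x₂ ≤ x₂' := by
    rw [sdiff_le_iff]
    exact hy
  calc h y = h ((y ⊓ x₂) ⊔ (y \ x₂)) := by rw [← hdecomp]
    _ = h (y ⊓ x₂) ⊔ h (y \ x₂) := hsup _ _
    _ = (y ⊓ x₂) ⊔ (y \ x₂) := by rw [h2 _ inf_le_right, h2' _ hle]
    _ = y := hdecomp.symm

/-- symmDiff of sups is below sup of symmDiffs. -/
lemma symmDiff_sup_le_sup_symmDiff (a b c d : B) :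
    symmDiff (a ⊔ b) (c ⊔ d) ≤ symmDiff a c ⊔ symmDiff b d := by
  rw [symmDiff, symmDiff, symmDiff, sup_sdiff, sup_sdiff]
  refine sup_le (sup_le ?_ ?_) (sup_le ?_ ?_)
  · exact (sdiff_le_sdiff le_rfl le_sup_left).trans (le_sup_left.trans le_sup_left)
  · exact (sdiff_le_sdiff le_rfl le_sup_right).trans (le_sup_left.trans le_sup_right)
  · exact (sdiff_le_sdiff le_rfl le_sup_left).trans (le_sup_right.trans le_sup_left)
  · exact (sdiff_le_sdiff le_rfl le_sup_right).trans (le_sup_right.trans le_sup_right)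

/-- If `d ∉ exKer h`, there is `e ≤ d` with `¬ h e ≤ e`. -/
lemma exKer_exists_not_le (hsup : ∀ x y, h (x ⊔ y) = h x ⊔ h y) {d : B}
    (hd : d ∉ exKer h) : ∃ e ≤ d, ¬ h e ≤ e := by
  by_contra hc
  push_neg at hc
  apply hd
  have key : ∀ y ≤ d, h y = y ⊓ h d := by
    intro y hy
    have h1 : h d = h y ⊔ h (d \ y) := by
      rw [← hsup]
      congr 1
      exact (sup_sdiff_cancel_right hy).symm
    have h2 : y ⊓ h (d \ y) = ⊥ := by
      have h3 : y ⊓ h (d \ y) ≤ y ⊓ (d \ y) :=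
        inf_le_inf_left y (hc _ sdiff_le)
      simpa [inf_sdiff_self_right] using le_bot_iff.mp (h3.trans (by simp [inf_sdiff_self_right]))
    rw [h1, inf_sup_left, h2, sup_bot_eq, inf_eq_right.mpr (hc y hy)]
  refine ⟨d \ h d, d ⊓ h d, ?_, ?_, ?_⟩
  · exact (sup_sdiff_inf d (h d)).symm
  · rw [key _ sdiff_le]
    simp [sdiff_eq, inf_assoc]
  · intro y hy
    rw [key y (hy.trans inf_le_left)]
    exact inf_eq_left.mpr (hy.trans inf_le_right)

end aux

theorem exists_antichain_of_infinite_quotient (h : B → B)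
    (hsup : ∀ x y, h (x ⊔ y) = h x ⊔ h y)
    (hinf : ∀ x y, h (x ⊓ y) = h x ⊓ h y)
    (hbot : h ⊥ = ⊥) (htop : h ⊤ = ⊤)
    (hquot : Infinite (Quot (fun x y : B => symmDiff x y ∈ exKer h))) :
    ∃ d : ℕ → B, (∀ m n, m ≠ n → Disjoint (d m) (d n)) ∧ ∀ n, ¬ h (d n) ≤ d n := by
  classical
  set I : Set B := exKer h with hI
  set r : B → B → Prop := fun x y : B => symmDiff x y ∈ exKer h with hr
  have hIdown : ∀ {z w : B}, w ≤ z → z ∈ I → w ∈ I := fun hwz hz => exKer_down h hsup hwz hz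
  have hIsup : ∀ {z z' : B}, z ∈ I → z' ∈ I → z ⊔ z' ∈ I := fun hz hz' =>
    exKer_sup_mem h hsup hz hz'
  have hIbot : (⊥ : B) ∈ I := exKer_bot_mem h hbot
  have requiv : Equivalence r := by
    constructor
    · intro x
      show symmDiff x x ∈ exKer h
      simpa [symmDiff_self] using hIbot
    · intro x y hxy
      show symmDiff y x ∈ exKer h
      rwa [symmDiff_comm]
    · intro x y z hxy hyz
      exact hIdown (symmDiff_triangle x y z) (hIsup hxy hyz)
  set q : B → Quot r := Quot.mk r with hq
  have hqeq : ∀ x y : B, q x = q y ↔ r x y := by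
    intro x y
    rw [hq, Quot.eq, requiv.eqvGen_iff]
  set S : B → Set (Quot r) := fun b => q '' {x | x ≤ b} with hS
  -- the key splitting lemma
  have keyA : ∀ b c x y : B, c ≤ b → x ≤ b → y ≤ b →
      q (x ⊓ c) = q (y ⊓ c) → q (x ⊓ (b \ c)) = q (y ⊓ (b \ c)) → q x = q y := by
    intro b c x y hcb hxb hyb e1 e2
    rw [hqeq] at e1 e2 ⊢
    have hx : x = (x ⊓ c) ⊔ (x ⊓ (b \ c)) := by
      rw [← inf_sup_left]
      exact (inf_eq_left.mpr (hxb.trans (sup_sdiff_cancel_right hcb).ge)).symm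
    have htri : symmDiff x y ≤
        symmDiff (x ⊓ c) (y ⊓ c) ⊔ symmDiff (x ⊓ (b \ c)) (y ⊓ (b \ c))  := by
      have hy : y = (y ⊓ c) ⊔ (y ⊓ (b \ c)) := by
        rw [← inf_sup_left]
        exact (inf_eq_left.mpr (hyb.trans (sup_sdiff_cancel_right hcb).ge)).symm
      calc symmDiff x y = symmDiff ((x ⊓ c) ⊔ (x ⊓ (b \ c))) ((y ⊓ c) ⊔ (y ⊓ (b \ c))) := by
            rw [← hx, ← hy]
        _ ≤ _ := symmDiff_sup_le_sup_symmDiff _ _ _ _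
    exact hIdown htri (hIsup e1 e2)
  -- S ⊤ is infinite
  have hStop : (S ⊤).Infinite := by
    have hrange : S ⊤ = Set.range q := by
      rw [hS]; simp [Set.image_univ]
    have hsurj : Function.Surjective q := fun c => Quot.exists_rep c
    rw [hrange, Set.range_eq_univ.mpr hsurj]
    exact Set.infinite_univ
  -- splitting step
  have keyC : ∀ b : B, (S b).Infinite → ∃ a, a ≤ b ∧ a ∉ I ∧ (S (b \ a)).Infinite := by
    intro b hSb
    -- pick x ≤ b with q x ≠ q ⊥ and q x ≠ q b
    obtain ⟨c, hc, hcne⟩ := (hSb.diff ((Set.finite_singleton (q b)).insert (q ⊥))).nonempty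
    obtain ⟨x, hxb, rfl⟩ := hc
    have hne0 : q x ≠ q ⊥ := fun e => hcne (Set.mem_insert_iff.mpr (Or.inl e))
    have hneb : q x ≠ q b := fun e => hcne (Set.mem_insert_iff.mpr (Or.inr (by simp [e])))
    -- injection from S b into S x × S (b \ x)
    have hinj : ∀ (hx : (S x).Finite) (hbx : (S (b \ x)).Finite), False := by
      intro hx hbx
      have : Finite ↥(S x ×ˢ S (b \ x)) := (hx.prod hbx).to_subtype
      have hrep : ∀ c : ↥(S b), ∃ z : B, z ≤ b ∧ q z = c := by
        rintro ⟨c, z, hz, rfl⟩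
        exact ⟨z, hz, rfl⟩
      choose rep hrep1 hrep2 using hrep
      have : Function.Injective (fun c : ↥(S b) =>
          (⟨(q (rep c ⊓ x), q (rep c ⊓ (b \ x))), ⟨rep c ⊓ x, inf_le_right, rfl⟩,
            ⟨rep c ⊓ (b \ x), inf_le_right, rfl⟩⟩ : ↥(S x ×ˢ S (b \ x)))) := by
        intro c c' he
        have h1 := congrArg (fun p => (p : Quot r × Quot r).1) (congrArg Subtype.val he)
        have h2 := congrArg (fun p => (p : Quot r × Quot r).2) (congrArg Subtype.val he)
        have := keyA b x (rep c) (rep c') (le_of_eq rfl |>.trans hxb) (hrep1 c) (hrep1 c') h1 h2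
        rw [hrep2 c, hrep2 c'] at this
        exact Subtype.ext this
      have : Finite ↥(S b) := Finite.of_injective _ this
      exact hSb (Set.toFinite _)
    by_cases hcase : (S (b \ x)).Infinite
    · refine ⟨x, hxb, ?_, hcase⟩
      intro hxI
      apply hne0
      rw [hqeq]
      simpa [hr, symmDiff_bot] using hxI
    · have hxinf : (S x).Infinite := by
        intro hfin
        exact hinj hfin (Set.not_infinite.mp hcase)
      refine ⟨b \ x, sdiff_le, ?_, ?_⟩
      · intro hmem
        apply hneb
        rw [hqeq]
        show symmDiff x b ∈ exKer h
        rw [symmDiff, sdiff_eq_bot_iff.mpr hxb, bot_sup_eq]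
        exact hmem
      · have : b \ (b \ x) = x := sdiff_sdiff_eq_self hxb
        rwa [this]
  -- iterate to build the antichain
  have step : ∀ p : {b : B // (S b).Infinite}, ∃ a, a ≤ p.1 ∧ a ∉ I ∧ (S (p.1 \ a)).Infinite :=
    fun p => keyC p.1 p.2
  choose pick hpick1 hpick2 hpick3 using step
  let g : ℕ → {b : B // (S b).Infinite} := fun n =>
    Nat.rec ⟨⊤, hStop⟩ (fun _ p => ⟨p.1 \ pick p, hpick3 p⟩) n
  have hgsucc : ∀ n, (g (n + 1)).1 = (g n).1 \ pick (g n) := fun n => rfl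
  set a : ℕ → B := fun n => pick (g n) with ha
  have hanti : ∀ m n, m ≤ n → (g n).1 ≤ (g m).1 := by
    intro m n hmn
    induction n with
    | zero => simp_all
    | succ k ih =>
      rcases Nat.eq_or_lt_of_le hmn with rfl | hlt
      · exact le_rfl
      · exact le_trans (by rw [hgsucc]; exact sdiff_le) (ih (Nat.lt_succ_iff.mp hlt))
  have hdisj : ∀ m n, m < n → Disjoint (a m) (a n) := by
    intro m n hmn
    have h1 : a n ≤ (g n).1 := hpick1 _
    have h2 : (g n).1 ≤ (g (m + 1)).1 := hanti _ _ hmn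
    have h3 : (g (m + 1)).1 = (g m).1 \ a m := hgsucc m
    have : a n ≤ (g m).1 \ a m := h1.trans (h2.trans_eq h3)
    exact disjoint_sdiff_self_right.mono_right this
  -- refine each aₙ to eₙ with h eₙ ≰ eₙ
  have hrefine : ∀ n, ∃ e ≤ a n, ¬ h e ≤ e := fun n =>
    exKer_exists_not_le h hsup (hpick2 (g n))
  choose e he1 he2 using hrefine
  refine ⟨e, ?_, he2⟩
  intro m n hmn
  rcases Nat.lt_or_ge m n with hlt | hge
  · exact (hdisj m n hlt).mono (he1 m) (he1 n)
  · exact ((hdisj n m (lt_of_le_of_ne hge (Ne.symm hmn))).mono (he1 n) (he1 m)).symm
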